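/- Res_{z=1}(f(z)) = Res_{z=0}(e^z f(e^z)) for f(z) = 1/(z^{t+1}(1-z^{a_1})⋯(1-z^{a_n})); consequently P_A(t) = -Res_{z=0}( e^{-tz} / ((1-e^{a_1 z})⋯(1-e^{a_n z})) ). -/

import Mathlib

open scoped Real
open PowerSeries Filter Metric Set Complex FormalMultilinearSeries

noncomputable section ResCOVaux

/-- `f` is given near `0` by the formal power series `φ`. -/
def HasPS (f : ℂ → ℂ) (φ : PowerSeries ℂ) : Prop :=
  HasFPowerSeriesAt f (FormalMultilinearSeries.ofScalars ℂ (fun k => PowerSeries.coeff k φ)) 0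

lemma ofScalars_coeff (c : ℕ → ℂ) (k : ℕ) :
    (FormalMultilinearSeries.ofScalars ℂ c).coeff k = c k := by
  simp only [FormalMultilinearSeries.coeff, FormalMultilinearSeries.ofScalars,
    ContinuousMultilinearMap.smul_apply, ContinuousMultilinearMap.mkPiAlgebraFin_apply,
    smul_eq_mul]
  have : (List.ofFn (1 : Fin k → ℂ)).prod = 1 := by
    rw [List.prod_ofFn]; simp
  rw [this, mul_one]

lemma hasPS_iff_hasSum {f : ℂ → ℂ} {φ : PowerSeries ℂ} :
    HasPS f φ ↔ ∀ᶠ z in nhds (0 : ℂ), HasSum (fun k => PowerSeries.coeff k φ * z ^ k) (f z) := by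
  rw [HasPS, hasFPowerSeriesAt_iff]
  have h : ∀ z : ℂ, (fun k =>
      z ^ k • (FormalMultilinearSeries.ofScalars ℂ (fun k => PowerSeries.coeff k φ)).coeff k)
      = fun k => PowerSeries.coeff k φ * z ^ k := by
    intro z; funext k; rw [ofScalars_coeff, smul_eq_mul, mul_comm]
  simp only [h, zero_add]

lemma HasPS.analyticAt {f : ℂ → ℂ} {φ : PowerSeries ℂ} (h : HasPS f φ) : AnalyticAt ℂ f 0 :=
  ⟨_, h⟩

lemma hasPS_of_fps {f : ℂ → ℂ} {p : FormalMultilinearSeries ℂ ℂ ℂ}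
    (hp : HasFPowerSeriesAt f p 0) : HasPS f (PowerSeries.mk p.coeff) := by
  rw [hasPS_iff_hasSum]
  rw [hasFPowerSeriesAt_iff] at hp
  filter_upwards [hp] with z hz
  have h : (fun k => PowerSeries.coeff k (PowerSeries.mk p.coeff) * z ^ k)
      = fun k => z ^ k • p.coeff k := by
    funext k; rw [PowerSeries.coeff_mk, smul_eq_mul, mul_comm]
  rw [h]; simpa using hz

lemma analyticAt_hasPS {f : ℂ → ℂ} (h : AnalyticAt ℂ f 0) : ∃ φ, HasPS f φ := by
  obtain ⟨p, hp⟩ := h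
  exact ⟨_, hasPS_of_fps hp⟩

lemma HasPS.unique {f : ℂ → ℂ} {φ ψ : PowerSeries ℂ} (h1 : HasPS f φ) (h2 : HasPS f ψ) :
    φ = ψ := by
  have := h1.eq_formalMultilinearSeries h2
  ext k
  have hk := congrArg (fun p : FormalMultilinearSeries ℂ ℂ ℂ => p.coeff k) this
  simpa [ofScalars_coeff] using hk

lemma HasPS.congr {f g : ℂ → ℂ} {φ : PowerSeries ℂ} (h : HasPS f φ)
    (he : ∀ᶠ z in nhds (0 : ℂ), g z = f z) : HasPS g φ := by
  rw [hasPS_iff_hasSum] at h ⊢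
  filter_upwards [h, he] with z h1 h2
  rw [h2]; exact h1

lemma HasPS.funext {f g : ℂ → ℂ} {φ : PowerSeries ℂ} (h : HasPS f φ)
    (he : ∀ z, g z = f z) : HasPS g φ :=
  h.congr (Filter.Eventually.of_forall he)

lemma hasPS_const (c : ℂ) : HasPS (fun _ => c) (PowerSeries.C c) := by
  rw [hasPS_iff_hasSum]
  filter_upwards with z
  have := hasSum_single (f := fun k => PowerSeries.coeff k (PowerSeries.C c) * z ^ k) 0
    (fun b hb => by simp [PowerSeries.coeff_C, hb])
  simpa using this

lemma hasPS_one : HasPS (fun _ => (1 : ℂ)) 1 := by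
  simpa using hasPS_const 1

lemma hasPS_X : HasPS (fun z => z) (PowerSeries.X : PowerSeries ℂ) := by
  rw [hasPS_iff_hasSum]
  filter_upwards with z
  have := hasSum_single (f := fun k => PowerSeries.coeff k (PowerSeries.X : PowerSeries ℂ) * z ^ k) 1
    (fun b hb => by simp [PowerSeries.coeff_X, hb])
  simpa using this

lemma HasPS.sub {f g : ℂ → ℂ} {φ ψ : PowerSeries ℂ} (hf : HasPS f φ) (hg : HasPS g ψ) :
    HasPS (fun z => f z - g z) (φ - ψ) := by
  rw [hasPS_iff_hasSum] at hf hg ⊢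
  filter_upwards [hf, hg] with z h1 h2
  simpa [map_sub, sub_mul] using h1.sub h2

lemma HasPS.mul {f g : ℂ → ℂ} {φ ψ : PowerSeries ℂ} (hf : HasPS f φ) (hg : HasPS g ψ) :
    HasPS (fun z => f z * g z) (φ * ψ) := by
  rw [hasPS_iff_hasSum] at hf hg ⊢
  filter_upwards [hf, hg] with z h1 h2
  have hs1 : Summable fun k => ‖PowerSeries.coeff k φ * z ^ k‖ :=
    summable_norm_iff.mpr h1.summable
  have hs2 : Summable fun k => ‖PowerSeries.coeff k ψ * z ^ k‖ :=
    summable_norm_iff.mpr h2.summable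
  have key := hasSum_sum_range_mul_of_summable_norm hs1 hs2
  rw [h1.tsum_eq, h2.tsum_eq] at key
  have h : (fun m => ∑ k ∈ Finset.range (m + 1),
      (PowerSeries.coeff k φ * z ^ k) * (PowerSeries.coeff (m - k) ψ * z ^ (m - k)))
      = fun m => PowerSeries.coeff m (φ * ψ) * z ^ m := by
    funext m
    rw [PowerSeries.coeff_mul, Finset.Nat.sum_antidiagonal_eq_sum_range_succ_mk, Finset.sum_mul]
    refine Finset.sum_congr rfl fun k hk => ?_
    have hkm : k ≤ m := Nat.lt_succ_iff.mp (Finset.mem_range.mp hk)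
    have hz : z ^ k * z ^ (m - k) = z ^ m := by
      rw [← pow_add, Nat.add_sub_cancel' hkm]
    calc (PowerSeries.coeff k φ * z ^ k) * (PowerSeries.coeff (m - k) ψ * z ^ (m - k))
        = PowerSeries.coeff k φ * PowerSeries.coeff (m - k) ψ * (z ^ k * z ^ (m - k)) := by
          ring
      _ = PowerSeries.coeff k φ * PowerSeries.coeff (m - k) ψ * z ^ m := by rw [hz]
  rwa [h] at key

lemma hasPS_prod {ι : Type*} (s : Finset ι) (f : ι → ℂ → ℂ) (φ : ι → PowerSeries ℂ)
    (h : ∀ i ∈ s, HasPS (f i) (φ i)) :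
    HasPS (fun z => ∏ i ∈ s, f i z) (∏ i ∈ s, φ i) := by
  classical
  induction s using Finset.induction_on with
  | empty => simpa using hasPS_one
  | insert x s' hx ih =>
    simp only [Finset.prod_insert hx]
    exact (h x (Finset.mem_insert_self x s')).mul
      (ih (fun i hi => h i (Finset.mem_insert_of_mem hi)))

lemma HasPS.map_zero {f : ℂ → ℂ} {φ : PowerSeries ℂ} (h : HasPS f φ) :
    f 0 = PowerSeries.coeff 0 φ := by
  rw [hasPS_iff_hasSum] at h
  have h0 := h.self_of_nhds
  have h1 : HasSum (fun k => PowerSeries.coeff k φ * (0:ℂ) ^ k) (PowerSeries.coeff 0 φ) := by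
    have := hasSum_single (f := fun k => PowerSeries.coeff k φ * (0:ℂ) ^ k) 0
      (fun b hb => by simp [zero_pow hb])
    simpa using this
  exact h0.unique h1

lemma hasPS_exp (c : ℂ) :
    HasPS (fun z => Complex.exp (c * z)) (PowerSeries.rescale c (PowerSeries.exp ℂ)) := by
  rw [hasPS_iff_hasSum]
  filter_upwards with z
  have key : HasSum (fun k => (c * z) ^ k / (k.factorial : ℂ)) (Complex.exp (c * z)) := by
    rw [Complex.exp_eq_exp_ℂ]
    exact NormedSpace.expSeries_div_hasSum_exp (c * z)
  have h : (fun k => PowerSeries.coeff k (PowerSeries.rescale c (PowerSeries.exp ℂ)) * z ^ k)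
      = fun k => (c * z) ^ k / (k.factorial : ℂ) := by
    funext k
    rw [PowerSeries.coeff_rescale, PowerSeries.coeff_exp]
    have : (algebraMap ℚ ℂ) (1 / (k.factorial : ℚ)) = 1 / (k.factorial : ℂ) := by
      push_cast [map_div₀, map_one, map_natCast]; ring
    rw [this, mul_pow]
    ring
  rwa [h]

lemma HasPS.split {f : ℂ → ℂ} {φ : PowerSeries ℂ} (h : HasPS f φ) (m : ℕ) :
    ∃ g : ℂ → ℂ, HasPS g (PowerSeries.mk fun k => PowerSeries.coeff (k + m) φ) ∧
      ∀ z, f z = (∑ j ∈ Finset.range m, PowerSeries.coeff j φ * z ^ j) + z ^ m * g z := by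
  induction m with
  | zero =>
    refine ⟨f, ?_, fun z => by simp⟩
    have : (PowerSeries.mk fun k => PowerSeries.coeff (k + 0) φ) = φ := by
      ext k; simp
    rw [this]; exact h
  | succ m ih =>
    obtain ⟨g, hg, hid⟩ := ih
    have hg0 : g 0 = PowerSeries.coeff m φ := by
      have := hg.map_zero
      simpa using this
    have hfs : HasFPowerSeriesAt (dslope g 0)
        (FormalMultilinearSeries.ofScalars ℂ
          (fun k => PowerSeries.coeff k (PowerSeries.mk fun k => PowerSeries.coeff (k + m) φ))).fslope
        0 := hg.has_fpower_series_dslope_fslope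
    have hps := hasPS_of_fps hfs
    have hser : (PowerSeries.mk (FormalMultilinearSeries.ofScalars ℂ
        (fun k => PowerSeries.coeff k (PowerSeries.mk fun k => PowerSeries.coeff (k + m) φ))).fslope.coeff)
        = PowerSeries.mk fun k => PowerSeries.coeff (k + (m + 1)) φ := by
      ext k
      rw [PowerSeries.coeff_mk, FormalMultilinearSeries.coeff_fslope, ofScalars_coeff,
        PowerSeries.coeff_mk, PowerSeries.coeff_mk]
      have e : k + 1 + m = k + (m + 1) := by omega
      rw [e]
    rw [hser] at hps
    refine ⟨dslope g 0, hps, fun z => ?_⟩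
    have hds : g z = g 0 + z * dslope g 0 z := by
      have := sub_smul_dslope g 0 z
      simp only [sub_zero, smul_eq_mul] at this
      linear_combination -this
    rw [hid z, hds, Finset.sum_range_succ, hg0]
    ring

lemma HasPS.diffOn {f : ℂ → ℂ} {φ : PowerSeries ℂ} (h : HasPS f φ) :
    ∃ δ > (0:ℝ), DifferentiableOn ℂ f (Metric.ball (0:ℂ) δ) := by
  have := h.analyticAt.eventually_analyticAt
  rw [Metric.eventually_nhds_iff] at this
  obtain ⟨ε, hε, H⟩ := this
  exact ⟨ε, hε, fun y hy => ((H (by simpa [Metric.mem_ball] using hy)).differentiableAt).differentiableWithinAt⟩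


section Circle

lemma circleIntegral_finsum {ι : Type*} (s : Finset ι) (f : ι → ℂ → ℂ) {c : ℂ} {r : ℝ}
    (h : ∀ i ∈ s, CircleIntegrable (f i) c r) :
    (∮ z in C(c, r), ∑ i ∈ s, f i z) = ∑ i ∈ s, ∮ z in C(c, r), f i z := by
  unfold circleIntegral
  rw [← intervalIntegral.integral_finset_sum (fun i hi => ((circleIntegrable_iff r).mp (h i hi)))]
  congr 1
  funext θ
  rw [Finset.smul_sum]

lemma circleIntegral_deriv {F F' : ℂ → ℂ} {c : ℂ} {r : ℝ} (hr : 0 < r)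
    (h : ∀ z ∈ Metric.sphere c r, HasDerivAt F (F' z) z)
    (hc : ContinuousOn F' (Metric.sphere c r)) :
    (∮ z in C(c, r), F' z) = 0 := by
  have key : ∀ θ ∈ Set.uIcc (0:ℝ) (2 * π), HasDerivAt (fun t => F (circleMap c r t))
      (deriv (circleMap c r) θ • F' (circleMap c r θ)) θ := by
    intro θ _
    have h1 := (h _ (circleMap_mem_sphere c hr.le θ)).comp θ (hasDerivAt_circleMap c r θ)
    rw [deriv_circleMap, smul_eq_mul, mul_comm]
    exact h1
  have hcont : IntervalIntegrable (fun θ => deriv (circleMap c r) θ • F' (circleMap c r θ))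
      MeasureTheory.volume 0 (2 * π) := by
    apply ContinuousOn.intervalIntegrable
    apply ContinuousOn.fun_smul
    · have hd : deriv (circleMap c r) = fun θ => circleMap 0 r θ * Complex.I :=
        funext (deriv_circleMap c r)
      rw [hd]
      exact ((continuous_circleMap 0 r).mul continuous_const).continuousOn
    · exact hc.comp (continuous_circleMap c r).continuousOn
        (fun θ _ => circleMap_mem_sphere c hr.le θ)
  have := intervalIntegral.integral_eq_sub_of_hasDerivAt key hcont
  rw [circleIntegral, this]
  have hper : circleMap c r (2 * π) = circleMap c r 0 := by
    have := periodic_circleMap c r 0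
    simpa using this
  rw [hper, sub_self]

lemma cauchy_ev {g : ℂ → ℂ} {c : ℂ} {δ : ℝ} (hδ : 0 < δ)
    (hg : DifferentiableOn ℂ g (Metric.ball c δ)) :
    ∀ᶠ r in nhdsWithin 0 (Set.Ioi (0:ℝ)), (∮ z in C(c, r), g z) = 0 := by
  filter_upwards [Ioo_mem_nhdsGT hδ] with r hr
  exact Complex.circleIntegral_eq_zero_of_differentiable_on_off_countable hr.1.le
    Set.countable_empty (hg.continuousOn.mono (Metric.closedBall_subset_ball hr.2))
    (fun z hz => hg.differentiableAt (Metric.isOpen_ball.mem_nhds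
      (Metric.ball_subset_ball hr.2.le hz.1)))

lemma circleIntegral_add {f g : ℂ → ℂ} {c : ℂ} {R : ℝ} (hf : CircleIntegrable f c R)
    (hg : CircleIntegrable g c R) :
    (∮ z in C(c, R), (f z + g z)) = (∮ z in C(c, R), f z) + ∮ z in C(c, R), g z := by
  simp only [circleIntegral, smul_add, intervalIntegral.integral_add hf.out hg.out]

lemma two_pi_I_ne : (2 * (π:ℂ) * Complex.I) ≠ 0 := by
  simp [Real.pi_ne_zero, Complex.I_ne_zero, Complex.ofReal_ne_zero]

/-- Main evaluation lemma: if an integrand decomposes on small spheres around `c₀` into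
a finite "principal part" plus a term with vanishing small circle integrals, then its
small circle integrals are eventually `2πi` times the `(N-1)`-st coefficient. -/
lemma ev_int {F : ℂ → ℂ} {c₀ : ℂ} {N : ℕ} {co : ℕ → ℂ} {B : ℕ → ℂ → ℂ} {G : ℂ → ℂ} {ε : ℝ}
    (hε : 0 < ε) (hN : 0 < N)
    (hFeq : ∀ r ∈ Set.Ioo (0:ℝ) ε, ∀ w ∈ Metric.sphere c₀ r,
      F w = (∑ j ∈ Finset.range N, co j * B j w) + G w)
    (hG : ∀ᶠ r in nhdsWithin 0 (Set.Ioi (0:ℝ)), (∮ z in C(c₀, r), G z) = 0)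
    (hGint : ∀ r ∈ Set.Ioo (0:ℝ) ε, CircleIntegrable G c₀ r)
    (hB : ∀ j ∈ Finset.range N, ∀ᶠ r in nhdsWithin 0 (Set.Ioi (0:ℝ)),
      (∮ z in C(c₀, r), B j z) = (if j = N - 1 then 2 * (π:ℂ) * Complex.I else 0))
    (hBint : ∀ j ∈ Finset.range N, ∀ r ∈ Set.Ioo (0:ℝ) ε, CircleIntegrable (B j) c₀ r) :
    ∀ᶠ r in nhdsWithin 0 (Set.Ioi (0:ℝ)),
      (∮ z in C(c₀, r), F z) = (2 * (π:ℂ) * Complex.I) * co (N - 1) := by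
  have hBall : ∀ᶠ r in nhdsWithin 0 (Set.Ioi (0:ℝ)), ∀ j ∈ Finset.range N,
      (∮ z in C(c₀, r), B j z) = (if j = N - 1 then 2 * (π:ℂ) * Complex.I else 0) :=
    (Filter.eventually_all_finset (Finset.range N)).mpr hB
  filter_upwards [Ioo_mem_nhdsGT hε, hG, hBall]
    with r hr hGr hBr
  have hint : ∀ j ∈ Finset.range N, CircleIntegrable (fun z => co j * B j z) c₀ r := by
    intro j hj
    show IntervalIntegrable (fun θ => co j * B j (circleMap c₀ r θ)) MeasureTheory.volume 0 (2 * π)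
    exact IntervalIntegrable.const_mul (hBint j hj r hr) (co j)
  have hsum_int : CircleIntegrable (fun z => ∑ j ∈ Finset.range N, co j * B j z) c₀ r := by
    show IntervalIntegrable (fun θ => ∑ j ∈ Finset.range N, co j * B j (circleMap c₀ r θ))
      MeasureTheory.volume 0 (2 * π)
    have heq : (fun θ => ∑ j ∈ Finset.range N, co j * B j (circleMap c₀ r θ))
        = ∑ j ∈ Finset.range N, (fun θ => co j * B j (circleMap c₀ r θ)) := by
      funext θ; simp
    rw [heq]
    exact IntervalIntegrable.sum _ (fun j hj => (hint j hj))
  calc (∮ z in C(c₀, r), F z)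
      = ∮ z in C(c₀, r), ((∑ j ∈ Finset.range N, co j * B j z) + G z) :=
        circleIntegral.integral_congr hr.1.le (fun w hw => hFeq r hr w hw)
    _ = (∮ z in C(c₀, r), ∑ j ∈ Finset.range N, co j * B j z) + ∮ z in C(c₀, r), G z :=
        circleIntegral_add hsum_int (hGint r hr)
    _ = (∑ j ∈ Finset.range N, ∮ z in C(c₀, r), co j * B j z) + 0 := by
        rw [hGr, circleIntegral_finsum _ _ hint]
    _ = ∑ j ∈ Finset.range N, co j * ∮ z in C(c₀, r), B j z := by
        rw [add_zero]
        refine Finset.sum_congr rfl fun j hj => ?_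
        simpa [smul_eq_mul] using circleIntegral.integral_smul (co j) (B j) c₀ r
    _ = (2 * (π:ℂ) * Complex.I) * co (N - 1) := by
        rw [Finset.sum_congr rfl (fun j hj => by rw [hBr j hj])]
        simp only [mul_ite, mul_zero]
        rw [Finset.sum_ite_eq' (Finset.range N) (N-1) (fun j => co j * (2 * (π:ℂ) * Complex.I))]
        have : N - 1 ∈ Finset.range N := Finset.mem_range.mpr (by omega)
        rw [if_pos this]
        ring

end Circle

section Factor

/-- The analytic continuation of `(1 - e^{c z})/z` at `0`. -/
def vfun (c : ℂ) : ℂ → ℂ :=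
  Function.update (fun z => (1 - Complex.exp (c * z)) / z) 0 (-c)

lemma vfun_zero (c : ℂ) : vfun c 0 = -c := Function.update_self _ _ _

lemma vfun_ne (c : ℂ) {z : ℂ} (hz : z ≠ 0) : vfun c z = (1 - Complex.exp (c * z)) / z :=
  Function.update_of_ne hz _ _

lemma mul_vfun (c : ℂ) (z : ℂ) : z * vfun c z = 1 - Complex.exp (c * z) := by
  rcases eq_or_ne z 0 with rfl | hz
  · simp
  · rw [vfun_ne c hz, mul_comm, div_mul_cancel₀ _ hz]

lemma hasDerivAt_one_sub_exp (c : ℂ) :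
    HasDerivAt (fun z => 1 - Complex.exp (c * z)) (-c) 0 := by
  have h1 : HasDerivAt (fun z : ℂ => c * z) c 0 := by
    simpa using (hasDerivAt_id (0:ℂ)).const_mul c
  have h2 := h1.cexp
  simp only [mul_zero, Complex.exp_zero, one_mul] at h2
  simpa using h2.const_sub 1

lemma vfun_analyticAt (c : ℂ) : AnalyticAt ℂ (vfun c) 0 := by
  apply Complex.analyticAt_of_differentiable_on_punctured_nhds_of_continuousAt
  · filter_upwards [self_mem_nhdsWithin] with z hz
    have hz' : z ≠ 0 := hz
    have hev : ∀ᶠ w in nhds z, vfun c w = (1 - Complex.exp (c * w)) / w := by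
      filter_upwards [isOpen_compl_singleton.mem_nhds hz'] with w hw
      exact vfun_ne c hw
    rw [Filter.EventuallyEq.differentiableAt_iff hev]
    exact ((differentiableAt_const 1).sub
      (((differentiableAt_id).const_mul c).cexp)).div differentiableAt_id hz'
  · rw [vfun, continuousAt_update_same]
    have := hasDerivAt_iff_tendsto_slope.mp (hasDerivAt_one_sub_exp c)
    refine this.congr' ?_
    filter_upwards [self_mem_nhdsWithin] with z hz
    simp [slope_def_field, Function.update_of_ne, hz]

lemma factor_lemma (c : ℂ) : ∃ φ : PowerSeries ℂ, HasPS (vfun c) φ ∧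
    PowerSeries.X * φ = 1 - PowerSeries.rescale c (PowerSeries.exp ℂ) := by
  obtain ⟨φ, hφ⟩ := analyticAt_hasPS (vfun_analyticAt c)
  refine ⟨φ, hφ, ?_⟩
  have h1 : HasPS (fun z => z * vfun c z) (PowerSeries.X * φ) := hasPS_X.mul hφ
  have h2 : HasPS (fun z => 1 - Complex.exp (c * z))
      ((1 : PowerSeries ℂ) - PowerSeries.rescale c (PowerSeries.exp ℂ)) :=
    hasPS_one.sub (hasPS_exp c)
  exact (h1.funext (fun z => (mul_vfun c z).symm)).unique h2

end Factor

section Laurent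

open HahnSeries

lemma coe_coeff_neg_one (φ : PowerSeries ℂ) :
    HahnSeries.coeff (φ : LaurentSeries ℂ) (-1) = 0 := by
  rw [show ((φ : LaurentSeries ℂ)) = HahnSeries.ofPowerSeries ℤ ℂ φ from rfl,
    ofPowerSeries_apply]
  apply embDomain_notin_range
  simp only [Set.mem_range, RelEmbedding.coe_mk, Function.Embedding.coeFn_mk]
  push_neg
  intro m
  show ((m:ℕ):ℤ) ≠ -1
  omega

lemma single_inv_single (n : ℤ) :
    ((HahnSeries.single n 1 : LaurentSeries ℂ))⁻¹ = HahnSeries.single (-n) 1 := by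
  refine inv_eq_of_mul_eq_one_right ?_
  rw [HahnSeries.single_mul_single, add_neg_cancel, mul_one]
  rw [← HahnSeries.C_apply, HahnSeries.C_one]

lemma coe_ne_zero {U : PowerSeries ℂ} (hU : PowerSeries.constantCoeff U ≠ 0) :
    (U : LaurentSeries ℂ) ≠ 0 := by
  intro h
  apply hU
  have := congrArg (fun x : LaurentSeries ℂ => HahnSeries.coeff x 0) h
  simp only [HahnSeries.coeff_zero] at this
  rw [show ((0:ℤ)) = ((0:ℕ):ℤ) from rfl, LaurentSeries.coeff_coe_powerSeries] at this
  rwa [PowerSeries.coeff_zero_eq_constantCoeff] at this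

lemma laurent_coeff_eq {n : ℕ} (hn : 0 < n) (ψ U E D : PowerSeries ℂ)
    (hU : PowerSeries.constantCoeff U ≠ 0) (hEU : ψ * U = E)
    (hD : PowerSeries.X ^ n * U = D) :
    HahnSeries.coeff ((E : LaurentSeries ℂ) * (D : LaurentSeries ℂ)⁻¹) (-1)
      = PowerSeries.coeff (n - 1) ψ := by
  have hDL : (D : LaurentSeries ℂ)
      = HahnSeries.single (n : ℤ) 1 * (U : LaurentSeries ℂ) := by
    rw [← hD]
    rw [show ((((PowerSeries.X ^ n * U : PowerSeries ℂ)) : LaurentSeries ℂ))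
      = HahnSeries.ofPowerSeries ℤ ℂ (PowerSeries.X ^ n * U) from rfl]
    rw [map_mul, map_pow, ofPowerSeries_X, HahnSeries.single_pow]
    norm_num
  have hEL : (E : LaurentSeries ℂ) = (ψ : LaurentSeries ℂ) * (U : LaurentSeries ℂ) := by
    rw [← hEU]
    rw [show ((((ψ * U : PowerSeries ℂ)) : LaurentSeries ℂ))
      = HahnSeries.ofPowerSeries ℤ ℂ (ψ * U) from rfl, map_mul]
  have hUne := coe_ne_zero hU
  have key : (E : LaurentSeries ℂ) * (D : LaurentSeries ℂ)⁻¹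
      = (ψ : LaurentSeries ℂ) * HahnSeries.single (-(n:ℤ)) 1 := by
    rw [hEL, hDL, mul_inv, single_inv_single]
    calc (ψ : LaurentSeries ℂ) * ↑U * (HahnSeries.single (-(n:ℤ)) 1 * (↑U)⁻¹)
        = (ψ : LaurentSeries ℂ) * HahnSeries.single (-(n:ℤ)) 1 * (↑U * (↑U)⁻¹) := by ring
      _ = (ψ : LaurentSeries ℂ) * HahnSeries.single (-(n:ℤ)) 1 := by
          rw [mul_inv_cancel₀ hUne, mul_one]
  rw [key, mul_comm]
  have harith : (-1 : ℤ) = ((n - 1 : ℕ) : ℤ) + (-(n:ℤ)) := by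
    have : ((n - 1 : ℕ) : ℤ) = (n : ℤ) - 1 := by
      omega
    omega
  rw [harith, HahnSeries.coeff_single_mul_add, one_mul, LaurentSeries.coeff_coe_powerSeries]

end Laurent

section Blocks

lemma B0_ev {n : ℕ} (j : ℕ) (hj : j ∈ Finset.range n) :
    ∀ᶠ r in nhdsWithin 0 (Set.Ioi (0:ℝ)),
      (∮ z in C((0:ℂ), r), z ^ ((j:ℤ) - n))
        = (if j = n - 1 then 2 * (π:ℂ) * Complex.I else 0) := by
  have hjn : j < n := Finset.mem_range.mp hj
  filter_upwards [self_mem_nhdsWithin] with r hr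
  have hr0 : (0:ℝ) < r := hr
  have hcongr : (fun z : ℂ => z ^ ((j:ℤ) - n)) = fun z : ℂ => (z - 0) ^ ((j:ℤ) - n) := by
    funext z; rw [sub_zero]
  by_cases hj1 : j = n - 1
  · have hm : (j:ℤ) - n = -1 := by omega
    rw [if_pos hj1]
    calc (∮ z in C((0:ℂ), r), z ^ ((j:ℤ) - n))
        = ∮ z in C((0:ℂ), r), (z - 0)⁻¹ := by
          rw [hcongr, hm]; simp only [zpow_neg_one]
      _ = 2 * (π:ℂ) * Complex.I :=
          circleIntegral.integral_sub_inv_of_mem_ball (Metric.mem_ball_self hr0)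
  · have hm : (j:ℤ) - n ≠ -1 := by omega
    rw [if_neg hj1, hcongr]
    exact circleIntegral.integral_sub_zpow_of_ne hm 0 0 r

lemma B0_int {n : ℕ} (j : ℕ) {r : ℝ} (hr : 0 < r) :
    CircleIntegrable (fun z : ℂ => z ^ ((j:ℤ) - n)) 0 r := by
  have hcongr : (fun z : ℂ => z ^ ((j:ℤ) - n)) = fun z : ℂ => (z - 0) ^ ((j:ℤ) - n) := by
    funext z; rw [sub_zero]
  rw [hcongr]
  rw [circleIntegrable_sub_zpow_iff]
  right; right
  intro hmem
  rw [Metric.mem_sphere, dist_self] at hmem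
  exact (abs_ne_zero.mpr hr.ne').symm hmem

lemma ball_one_half {ε : ℝ} (hε2 : ε ≤ 1/2) {w : ℂ} (hw : w ∈ Metric.ball (1:ℂ) ε) :
    0 < w.re := by
  have hd : dist w 1 < 1/2 := lt_of_lt_of_le (Metric.mem_ball.mp hw) hε2
  rw [Complex.dist_eq] at hd
  have h1 := Complex.abs_re_le_norm (w - 1)
  rw [Complex.sub_re, Complex.one_re] at h1
  have := abs_lt.mp (lt_of_le_of_lt h1 hd)
  linarith [this.1]

lemma sphere_facts {ε r : ℝ} (hε2 : ε ≤ 1/2) (hr : r ∈ Set.Ioo (0:ℝ) ε) {w : ℂ}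
    (hw : w ∈ Metric.sphere (1:ℂ) r) :
    w ∈ Metric.ball (1:ℂ) ε ∧ w ≠ 1 ∧ w ≠ 0 ∧ w ∈ Complex.slitPlane ∧ Complex.log w ≠ 0 := by
  have hball : w ∈ Metric.ball (1:ℂ) ε := by
    rw [Metric.mem_ball]; rw [Metric.mem_sphere] at hw; rw [hw]; exact hr.2
  have hre : 0 < w.re := ball_one_half hε2 hball
  have hw1 : w ≠ 1 := by
    intro h; rw [Metric.mem_sphere, h, dist_self] at hw; exact hr.1.ne hw
  have hw0 : w ≠ 0 := by
    intro h; rw [h] at hre; simp at hre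
  have hslit : w ∈ Complex.slitPlane := Complex.mem_slitPlane_iff.mpr (Or.inl hre)
  refine ⟨hball, hw1, hw0, hslit, fun h => hw1 ?_⟩
  have := Complex.exp_log hw0
  rw [h, Complex.exp_zero] at this
  exact this.symm

lemma B1_ev_ne {ε : ℝ} (hε : 0 < ε) (hε2 : ε ≤ 1/2) {m : ℤ} (hm : m ≠ -1) :
    ∀ᶠ r in nhdsWithin 0 (Set.Ioi (0:ℝ)),
      (∮ w in C((1:ℂ), r), w⁻¹ * (Complex.log w) ^ m) = 0 := by
  filter_upwards [Ioo_mem_nhdsGT hε] with r hr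
  have hm1 : (m + 1 : ℂ) ≠ 0 := by
    have h : ((m : ℂ) + 1) = ((m + 1 : ℤ) : ℂ) := by push_cast; ring
    rw [h]
    exact_mod_cast (by omega : (m + 1 : ℤ) ≠ 0)
  apply circleIntegral_deriv (F := fun w => (m + 1 : ℂ)⁻¹ * (Complex.log w) ^ (m + 1)) hr.1
  · intro w hw
    obtain ⟨hball, hw1, hw0, hslit, hlogne⟩ := sphere_facts hε2 hr hw
    have hlog : HasDerivAt Complex.log w⁻¹ w := Complex.hasDerivAt_log hslit
    have hz := hasDerivAt_zpow (m + 1) (Complex.log w) (Or.inl hlogne)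
    have hcomp := hz.comp w hlog
    have hF := hcomp.const_mul ((m + 1 : ℂ)⁻¹)
    refine hF.congr_deriv ?_
    rw [add_sub_cancel_right]
    push_cast
    field_simp
  · intro w hw
    obtain ⟨hball, hw1, hw0, hslit, hlogne⟩ := sphere_facts hε2 hr hw
    exact (((continuousAt_inv₀ hw0).mul
      ((continuousAt_zpow₀ _ _ (Or.inl hlogne)).comp (continuousAt_clog hslit)))).continuousWithinAt

lemma B1_cont {ε r : ℝ} (hε2 : ε ≤ 1/2) (hr : r ∈ Set.Ioo (0:ℝ) ε) (m : ℤ) :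
    ContinuousOn (fun w : ℂ => w⁻¹ * (Complex.log w) ^ m) (Metric.sphere (1:ℂ) r) := by
  intro w hw
  obtain ⟨hball, hw1, hw0, hslit, hlogne⟩ := sphere_facts hε2 hr hw
  exact (((continuousAt_inv₀ hw0).mul
    ((continuousAt_zpow₀ _ _ (Or.inl hlogne)).comp (continuousAt_clog hslit)))).continuousWithinAt

lemma B1_ev_inv {ε : ℝ} (hε : 0 < ε) (hε2 : ε ≤ 1/2) :
    ∀ᶠ r in nhdsWithin 0 (Set.Ioi (0:ℝ)),
      (∮ w in C((1:ℂ), r), w⁻¹ * (Complex.log w) ^ (-1 : ℤ)) = 2 * (π:ℂ) * Complex.I := by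
  set η : ℂ → ℂ := fun w => w⁻¹ * (Complex.log w)⁻¹ - (w - 1)⁻¹ with hη_def
  have hη1 : η 1 = 0 := by simp [hη_def, Complex.log_one]
  have hηdiff : DifferentiableOn ℂ η (Metric.ball (1:ℂ) ε \ {1}) := by
    intro w hw
    obtain ⟨hball, hw1⟩ := hw
    have hw1' : w ≠ 1 := hw1
    have hre : 0 < w.re := ball_one_half hε2 hball
    have hw0 : w ≠ 0 := by intro h; rw [h] at hre; simp at hre
    have hslit : w ∈ Complex.slitPlane := Complex.mem_slitPlane_iff.mpr (Or.inl hre)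
    have hlogne : Complex.log w ≠ 0 := by
      intro h
      apply hw1'
      have := Complex.exp_log hw0
      rw [h, Complex.exp_zero] at this
      exact this.symm
    apply DifferentiableAt.differentiableWithinAt
    exact ((differentiableAt_inv hw0).mul
      ((differentiableAt_inv hlogne).comp w (Complex.differentiableAt_log hslit))).sub
      (DifferentiableAt.inv ((differentiableAt_id.sub (differentiableAt_const 1)))
        (sub_ne_zero.mpr hw1'))
  have hlim : Filter.Tendsto (fun w => η w * (w - 1)) (nhdsWithin 1 {(1:ℂ)}ᶜ) (nhds 0) := by
    have h₁ : Filter.Tendsto (fun w : ℂ => Complex.log w / (w - 1))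
        (nhdsWithin 1 {(1:ℂ)}ᶜ) (nhds 1) := by
      have := hasDerivAt_iff_tendsto_slope.mp (Complex.hasDerivAt_log Complex.one_mem_slitPlane)
      rw [inv_one] at this
      refine this.congr' ?_
      filter_upwards [self_mem_nhdsWithin] with w hw
      rw [slope_def_field, Complex.log_one, sub_zero]
    have h₂ : Filter.Tendsto (fun w : ℂ => (Complex.log w / (w - 1))⁻¹)
        (nhdsWithin 1 {(1:ℂ)}ᶜ) (nhds 1) := by
      have := h₁.inv₀ one_ne_zero
      rwa [inv_one] at this
    have h₃ : Filter.Tendsto (fun w : ℂ => w⁻¹) (nhdsWithin 1 {(1:ℂ)}ᶜ) (nhds 1) := by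
      have : Filter.Tendsto (fun w : ℂ => w⁻¹) (nhds 1) (nhds 1) := by
        have := (continuousAt_inv₀ (one_ne_zero (α := ℂ)))
        simpa using this.tendsto
      exact this.mono_left nhdsWithin_le_nhds
    have hcomb : Filter.Tendsto (fun w : ℂ => w⁻¹ * (Complex.log w / (w - 1))⁻¹ - 1)
        (nhdsWithin 1 {(1:ℂ)}ᶜ) (nhds 0) := by
      have := (h₃.mul h₂).sub (tendsto_const_nhds (x := (1:ℂ)))
      simpa using this
    refine hcomb.congr' ?_
    filter_upwards [self_mem_nhdsWithin] with w hw
    have hw1 : w ≠ (1:ℂ) := hw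
    have hsub : w - 1 ≠ 0 := sub_ne_zero.mpr hw1
    have hexp : η w * (w - 1) = w⁻¹ * (Complex.log w)⁻¹ * (w - 1) - 1 := by
      simp only [hη_def]
      rw [sub_mul, inv_mul_cancel₀ hsub]
    rw [hexp, inv_div, div_eq_mul_inv]
    ring
  have hlittle : (fun w => η w - η 1) =o[nhdsWithin 1 {(1:ℂ)}ᶜ] fun w : ℂ => (w - 1)⁻¹ := by
    rw [hη1]
    simp only [sub_zero]
    rw [Asymptotics.isLittleO_iff_tendsto' ?side]
    case side =>
      filter_upwards [self_mem_nhdsWithin] with w hw h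
      exact absurd h (inv_ne_zero (sub_ne_zero.mpr hw))
    refine hlim.congr' ?_
    filter_upwards with w
    rw [div_eq_mul_inv, inv_inv]
  have hupd := Complex.differentiableOn_update_limUnder_of_isLittleO
    (Metric.ball_mem_nhds (1:ℂ) hε) hηdiff hlittle
  filter_upwards [Ioo_mem_nhdsGT hε] with r hr
  have hsphere_ball : Metric.sphere (1:ℂ) r ⊆ Metric.ball (1:ℂ) ε := fun w hw => by
    rw [Metric.mem_ball]; rw [Metric.mem_sphere] at hw; rw [hw]; exact hr.2
  set η' := Function.update η 1 (limUnder (nhdsWithin 1 {(1:ℂ)}ᶜ) η) with hη'_def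
  have hcongr : Set.EqOn (fun w : ℂ => w⁻¹ * (Complex.log w) ^ (-1:ℤ))
      (fun w => (w - 1)⁻¹ + η' w) (Metric.sphere (1:ℂ) r) := by
    intro w hw
    obtain ⟨hball, hw1, hw0, hslit, hlogne⟩ := sphere_facts hε2 hr hw
    simp only [hη'_def, Function.update_of_ne hw1, hη_def, zpow_neg_one]
    ring
  rw [circleIntegral.integral_congr hr.1.le hcongr]
  have hint1 : CircleIntegrable (fun w : ℂ => (w - 1)⁻¹) 1 r := by
    rw [circleIntegrable_sub_inv_iff]
    right
    intro hmem
    rw [Metric.mem_sphere, dist_self] at hmem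
    exact (abs_ne_zero.mpr hr.1.ne').symm hmem
  have hint2 : CircleIntegrable η' 1 r :=
    ContinuousOn.circleIntegrable hr.1.le
      ((hupd.continuousOn.mono hsphere_ball).mono (fun x hx => hx))
  rw [circleIntegral_add hint1 hint2]
  have h1 : (∮ w in C((1:ℂ), r), (w - 1)⁻¹) = 2 * (π:ℂ) * Complex.I :=
    circleIntegral.integral_sub_inv_of_mem_ball (Metric.mem_ball_self hr.1)
  have h2 : (∮ w in C((1:ℂ), r), η' w) = 0 := by
    apply Complex.circleIntegral_eq_zero_of_differentiable_on_off_countable hr.1.le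
      Set.countable_empty
    · exact hupd.continuousOn.mono (Metric.closedBall_subset_ball hr.2)
    · intro z hz
      exact hupd.differentiableAt (Metric.isOpen_ball.mem_nhds
        (Metric.ball_subset_ball hr.2.le hz.1))
  rw [h1, h2, add_zero]

end Blocks

end ResCOVaux

/-- For `f(z) = 1/(z^{t+1}(1-z^{a_1})⋯(1-z^{a_n}))` we have
`Res_{z=1} f(z) = Res_{z=0} e^z f(e^z)`; consequently the polynomial part
`P_A(t) = -Res_{z=1} f` equals `-Res_{z=0} e^{-tz}/((1-e^{a_1 z})⋯(1-e^{a_n z}))`,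
the latter residue being the coefficient of `z^{-1}` in the formal Laurent expansion.
Residues at a point `c` are characterized by `∮_{|z-c|=r} = 2πi Res` for all small `r > 0`. -/
theorem residue_change_of_variables_exp (n : ℕ) (a : Fin n → ℕ) (ha : ∀ i, 0 < a i) (t : ℕ)
    (Res1 Res0 : ℂ)
    (hRes1 : ∀ᶠ r in nhdsWithin 0 (Set.Ioi (0 : ℝ)),
      (∮ z in C(1, r), (z ^ (t + 1) * ∏ i, (1 - z ^ (a i)))⁻¹) =
        (2 * π * Complex.I) * Res1)
    (hRes0 : ∀ᶠ r in nhdsWithin 0 (Set.Ioi (0 : ℝ)),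
      (∮ z in C(0, r),
          Complex.exp z *
            ((Complex.exp z) ^ (t + 1) * ∏ i, (1 - (Complex.exp z) ^ (a i)))⁻¹) =
        (2 * π * Complex.I) * Res0) :
    Res1 = Res0 ∧
      -Res1 =
        -(((PowerSeries.rescale (-(t : ℂ)) (PowerSeries.exp ℂ) : PowerSeries ℂ) :
              LaurentSeries ℂ) *
            ((∏ i, (1 - PowerSeries.rescale ((a i : ℂ)) (PowerSeries.exp ℂ)) :
              PowerSeries ℂ) : LaurentSeries ℂ)⁻¹).coeff (-1) := by
  classical
  have main : ∃ ρ : ℂ,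
      ρ = (((PowerSeries.rescale (-(t : ℂ)) (PowerSeries.exp ℂ) : PowerSeries ℂ) :
              LaurentSeries ℂ) *
            ((∏ i, (1 - PowerSeries.rescale ((a i : ℂ)) (PowerSeries.exp ℂ)) :
              PowerSeries ℂ) : LaurentSeries ℂ)⁻¹).coeff (-1) ∧
      (∀ᶠ r in nhdsWithin 0 (Set.Ioi (0 : ℝ)),
        (∮ z in C((1:ℂ), r), (z ^ (t + 1) * ∏ i, (1 - z ^ (a i)))⁻¹) =
          (2 * (π:ℂ) * Complex.I) * ρ) ∧
      (∀ᶠ r in nhdsWithin 0 (Set.Ioi (0 : ℝ)),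
        (∮ z in C((0:ℂ), r), Complex.exp z *
            ((Complex.exp z) ^ (t + 1) * ∏ i, (1 - (Complex.exp z) ^ (a i)))⁻¹) =
          (2 * (π:ℂ) * Complex.I) * ρ) := by
    rcases Nat.eq_zero_or_pos n with hn | hn
    · -- n = 0 : everything is holomorphic, both residues vanish
      subst hn
      refine ⟨0, ?_, ?_, ?_⟩
      · simp only [Finset.univ_eq_empty, Finset.prod_empty]
        rw [show ((1 : PowerSeries ℂ) : LaurentSeries ℂ) = 1 from
          map_one (HahnSeries.ofPowerSeries ℤ ℂ), inv_one, mul_one, coe_coeff_neg_one]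
      · have hfun : (fun z : ℂ => (z ^ (t + 1) * ∏ i : Fin 0, (1 - z ^ (a i)))⁻¹)
            = fun z : ℂ => (z ^ (t + 1))⁻¹ := by
          funext z; simp
        have hdiff : DifferentiableOn ℂ
            (fun z : ℂ => (z ^ (t + 1) * ∏ i : Fin 0, (1 - z ^ (a i)))⁻¹)
            (Metric.ball (1:ℂ) (1/2)) := by
          rw [hfun]
          intro z hz
          have hre : 0 < z.re := ball_one_half (le_refl (1/2)) hz
          have hz0 : z ≠ 0 := by intro h; rw [h] at hre; simp at hre
          exact (DifferentiableAt.inv (differentiableAt_id.pow (t+1))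
            (pow_ne_zero _ hz0)).differentiableWithinAt
        filter_upwards [cauchy_ev one_half_pos hdiff] with r hr
        rw [hr, mul_zero]
      · have hdiff : DifferentiableOn ℂ
            (fun z : ℂ => Complex.exp z *
              ((Complex.exp z) ^ (t + 1) * ∏ i : Fin 0, (1 - (Complex.exp z) ^ (a i)))⁻¹)
            (Metric.ball (0:ℂ) 1) := by
          intro z _
          apply DifferentiableAt.differentiableWithinAt
          apply (Complex.differentiable_exp z).mul
          apply DifferentiableAt.inv
          · exact ((Complex.differentiable_exp z).pow (t+1)).mul (by simp)
          · simp [Complex.exp_ne_zero, pow_ne_zero]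
        filter_upwards [cauchy_ev one_pos hdiff] with r hr
        rw [hr, mul_zero]
    · -- n ≥ 1 : the interesting case
      -- set up the formal data
      choose φ hφ hXφ using fun i : Fin n => factor_lemma ((a i : ℕ) : ℂ)
      have hca : ∀ i : Fin n, ((a i : ℕ) : ℂ) ≠ 0 :=
        fun i => Nat.cast_ne_zero.mpr (ha i).ne'
      set U : PowerSeries ℂ := ∏ i, φ i with hU_def
      set W : ℂ → ℂ := fun z => ∏ i, vfun ((a i : ℕ) : ℂ) z with hW_def
      have hW : HasPS W U := hasPS_prod Finset.univ _ _ (fun i _ => hφ i)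
      have hφ0 : ∀ i : Fin n, PowerSeries.constantCoeff (φ i) = -((a i : ℕ) : ℂ) := by
        intro i
        have := (hφ i).map_zero
        rw [vfun_zero] at this
        rw [← PowerSeries.coeff_zero_eq_constantCoeff]
        exact this.symm
      have hU0 : PowerSeries.constantCoeff U ≠ 0 := by
        rw [hU_def, map_prod]
        exact Finset.prod_ne_zero_iff.mpr
          (fun i _ => by rw [hφ0 i]; exact neg_ne_zero.mpr (hca i))
      have hW0 : W 0 ≠ 0 := by
        have : W 0 = ∏ i, (-((a i : ℕ) : ℂ)) := by
          rw [hW_def]; exact Finset.prod_congr rfl fun i _ => vfun_zero _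
        rw [this]
        exact Finset.prod_ne_zero_iff.mpr (fun i _ => neg_ne_zero.mpr (hca i))
      set P : ℂ → ℂ := fun z => Complex.exp (-(t:ℂ) * z) * (W z)⁻¹ with hP_def
      have hPan : AnalyticAt ℂ P 0 :=
        ((hasPS_exp (-(t:ℂ))).analyticAt).mul ((hW.analyticAt).inv hW0)
      obtain ⟨ψ, hψ⟩ := analyticAt_hasPS hPan
      have hψU : ψ * U = PowerSeries.rescale (-(t:ℂ)) (PowerSeries.exp ℂ) := by
        have hPW : HasPS (fun z => P z * W z) (ψ * U) := hψ.mul hW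
        have hev : ∀ᶠ z in nhds (0:ℂ), Complex.exp (-(t:ℂ) * z) = P z * W z := by
          filter_upwards [hW.analyticAt.continuousAt.eventually_ne hW0] with z hz
          rw [hP_def]
          simp only
          rw [mul_assoc, inv_mul_cancel₀ hz, mul_one]
        exact (hPW.congr hev).unique (hasPS_exp (-(t:ℂ)))
      have hXD : PowerSeries.X ^ n * U
          = ∏ i, (1 - PowerSeries.rescale ((a i : ℂ)) (PowerSeries.exp ℂ)) := by
        calc PowerSeries.X ^ n * U
            = (∏ _i : Fin n, (PowerSeries.X : PowerSeries ℂ)) * ∏ i, φ i := by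
              rw [Finset.prod_const, Finset.card_univ, Fintype.card_fin, hU_def]
          _ = ∏ i, (PowerSeries.X * φ i) := (Finset.prod_mul_distrib).symm
          _ = ∏ i, (1 - PowerSeries.rescale ((a i : ℂ)) (PowerSeries.exp ℂ)) :=
              Finset.prod_congr rfl fun i _ => hXφ i
      obtain ⟨g, hg, hgid⟩ := hψ.split n
      obtain ⟨δg, hδgpos, hgdiff⟩ := hg.diffOn
      set ρ : ℂ := PowerSeries.coeff (n - 1) ψ with hρ_def
      -- the key pointwise splitting
      have hPsplit : ∀ z : ℂ, z ≠ 0 → (z ^ n)⁻¹ * P z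
          = (∑ j ∈ Finset.range n, PowerSeries.coeff j ψ * z ^ ((j:ℤ) - n)) + g z := by
        intro z hz
        rw [hgid z, mul_add, ← mul_assoc, inv_mul_cancel₀ (pow_ne_zero _ hz), one_mul]
        congr 1
        rw [Finset.mul_sum]
        refine Finset.sum_congr rfl fun j hj => ?_
        rw [zpow_sub₀ hz, zpow_natCast, zpow_natCast, div_eq_mul_inv]
        ring
      have hfactor : ∀ (z : ℂ) (i : Fin n),
          1 - Complex.exp z ^ (a i) = z * vfun ((a i : ℕ) : ℂ) z := by
        intro z i
        rw [mul_vfun, Complex.exp_nat_mul]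
      have hprodW : ∀ z : ℂ, ∏ i, (1 - Complex.exp z ^ (a i)) = z ^ n * W z := by
        intro z
        rw [Finset.prod_congr rfl (fun i _ => hfactor z i), Finset.prod_mul_distrib,
          Finset.prod_const, Finset.card_univ, Fintype.card_fin, hW_def]
      have hexp_t : ∀ z : ℂ, Complex.exp z * (Complex.exp z ^ (t + 1))⁻¹
          = Complex.exp (-(t:ℂ) * z) := by
        intro z
        rw [← Complex.exp_nat_mul, ← Complex.exp_neg, ← Complex.exp_add]
        congr 1
        push_cast
        ring
      -- center 0 evaluation
      have ev0 : ∀ᶠ r in nhdsWithin 0 (Set.Ioi (0 : ℝ)),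
          (∮ z in C((0:ℂ), r), Complex.exp z *
              ((Complex.exp z) ^ (t + 1) * ∏ i, (1 - (Complex.exp z) ^ (a i)))⁻¹) =
            (2 * (π:ℂ) * Complex.I) * ρ := by
        have := ev_int (F := fun z : ℂ => Complex.exp z *
            ((Complex.exp z) ^ (t + 1) * ∏ i, (1 - (Complex.exp z) ^ (a i)))⁻¹)
          (c₀ := (0:ℂ)) (N := n) (co := fun j => PowerSeries.coeff j ψ)
          (B := fun j => fun z : ℂ => z ^ ((j:ℤ) - n)) (G := g) (ε := δg)
          hδgpos hn ?_ (cauchy_ev hδgpos hgdiff) ?_ (fun j hj => B0_ev j hj)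
          (fun j _ r hr => B0_int j hr.1)
        · exact this
        · intro r hr w hw
          have hw0 : w ≠ 0 := by
            intro h
            rw [Metric.mem_sphere, h, dist_self] at hw
            exact hr.1.ne hw
          calc Complex.exp w * ((Complex.exp w) ^ (t + 1) * ∏ i, (1 - Complex.exp w ^ (a i)))⁻¹
              = (Complex.exp w * (Complex.exp w ^ (t + 1))⁻¹) * ((w ^ n * W w)⁻¹) := by
                rw [hprodW w, mul_inv]; ring
            _ = (w ^ n)⁻¹ * P w := by
                rw [hexp_t w, hP_def]
                simp only [mul_inv]
                ring
            _ = _ := hPsplit w hw0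
        · intro r hr
          apply ContinuousOn.circleIntegrable hr.1.le
          apply hgdiff.continuousOn.mono
          intro w hw
          rw [Metric.mem_ball]
          rw [Metric.mem_sphere] at hw
          rw [show dist w 0 = dist w 0 from rfl] at hw
          rw [hw]
          exact hr.2
      -- center 1 setup
      obtain ⟨ε₁, hε₁pos, hε₁sub⟩ : ∃ ε₁ > 0,
          Metric.ball (1:ℂ) ε₁ ⊆ Complex.log ⁻¹' (Metric.ball (0:ℂ) δg) := by
        have hcont := continuousAt_clog Complex.one_mem_slitPlane
        have hmem : Complex.log ⁻¹' (Metric.ball (0:ℂ) δg) ∈ nhds (1:ℂ) := by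
          apply hcont.preimage_mem_nhds
          rw [Complex.log_one]
          exact Metric.ball_mem_nhds _ hδgpos
        exact Metric.mem_nhds_iff.mp hmem
      set ε : ℝ := min ε₁ (1/2) with hε_def
      have hεpos : 0 < ε := lt_min hε₁pos one_half_pos
      have hε2 : ε ≤ 1/2 := min_le_right _ _
      have hballsub : ∀ w : ℂ, w ∈ Metric.ball (1:ℂ) ε → Complex.log w ∈ Metric.ball (0:ℂ) δg :=
        fun w hw => hε₁sub (Metric.ball_subset_ball (min_le_left _ _) hw)
      -- center 1 evaluation
      have ev1 : ∀ᶠ r in nhdsWithin 0 (Set.Ioi (0 : ℝ)),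
          (∮ z in C((1:ℂ), r), (z ^ (t + 1) * ∏ i, (1 - z ^ (a i)))⁻¹) =
            (2 * (π:ℂ) * Complex.I) * ρ := by
        have := ev_int (F := fun z : ℂ => (z ^ (t + 1) * ∏ i, (1 - z ^ (a i)))⁻¹)
          (c₀ := (1:ℂ)) (N := n) (co := fun j => PowerSeries.coeff j ψ)
          (B := fun j => fun w : ℂ => w⁻¹ * (Complex.log w) ^ ((j:ℤ) - n))
          (G := fun w : ℂ => w⁻¹ * g (Complex.log w)) (ε := ε)
          hεpos hn ?_ ?_ ?_ ?_ ?_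
        · exact this
        · -- pointwise identity on spheres
          intro r hr w hw
          obtain ⟨hball, hw1, hw0, hslit, hlogne⟩ := sphere_facts hε2 hr hw
          have hwexp : Complex.exp (Complex.log w) = w := Complex.exp_log hw0
          have hwinv : w⁻¹ = Complex.exp (-(Complex.log w)) := by
            rw [Complex.exp_neg, hwexp]
          have hfact1 : ∀ i : Fin n,
              1 - w ^ (a i) = Complex.log w * vfun ((a i : ℕ) : ℂ) (Complex.log w) := by
            intro i
            rw [mul_vfun, Complex.exp_nat_mul, hwexp]
          have hprod1 : ∏ i, (1 - w ^ (a i))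
              = (Complex.log w) ^ n * W (Complex.log w) := by
            rw [Finset.prod_congr rfl (fun i _ => hfact1 i), Finset.prod_mul_distrib,
              Finset.prod_const, Finset.card_univ, Fintype.card_fin, hW_def]
          have hwpow : w ^ (t + 1) = Complex.exp (((t + 1 : ℕ) : ℂ) * Complex.log w) := by
            rw [Complex.exp_nat_mul, hwexp]
          have hcollect : (Complex.exp (((t + 1 : ℕ) : ℂ) * Complex.log w))⁻¹
              = w⁻¹ * Complex.exp (-(t:ℂ) * Complex.log w) := by
            rw [hwinv, ← Complex.exp_neg, ← Complex.exp_add]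
            congr 1
            push_cast
            ring
          calc (w ^ (t + 1) * ∏ i, (1 - w ^ (a i)))⁻¹
              = (Complex.exp (((t + 1 : ℕ) : ℂ) * Complex.log w))⁻¹ *
                  ((Complex.log w) ^ n * W (Complex.log w))⁻¹ := by
                rw [hwpow, hprod1, mul_inv]
            _ = w⁻¹ * (((Complex.log w) ^ n)⁻¹ * P (Complex.log w)) := by
                rw [hcollect, hP_def]
                simp only [mul_inv]
                ring
            _ = w⁻¹ * ((∑ j ∈ Finset.range n,
                  PowerSeries.coeff j ψ * (Complex.log w) ^ ((j:ℤ) - n)) +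
                  g (Complex.log w)) := by
                rw [hPsplit (Complex.log w) hlogne]
            _ = _ := by
                rw [mul_add, Finset.mul_sum]
                congr 1
                refine Finset.sum_congr rfl fun j hj => ?_
                ring
        · -- the analytic part integrates to zero
          apply cauchy_ev hεpos
          intro w hw
          have hre : 0 < w.re := ball_one_half hε2 hw
          have hw0 : w ≠ 0 := by intro h; rw [h] at hre; simp at hre
          have hslit : w ∈ Complex.slitPlane := Complex.mem_slitPlane_iff.mpr (Or.inl hre)
          apply DifferentiableAt.differentiableWithinAt
          exact (differentiableAt_inv hw0).mul
            ((hgdiff.differentiableAt (Metric.isOpen_ball.mem_nhds (hballsub w hw))).comp w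
              (Complex.differentiableAt_log hslit))
        · -- integrability of the analytic part
          intro r hr
          apply ContinuousOn.circleIntegrable hr.1.le
          intro w hw
          obtain ⟨hball, hw1, hw0, hslit, hlogne⟩ := sphere_facts hε2 hr hw
          exact ((continuousAt_inv₀ hw0).mul
            (((hgdiff.differentiableAt
                (Metric.isOpen_ball.mem_nhds (hballsub w hball))).continuousAt).comp
              (continuousAt_clog hslit))).continuousWithinAt
        · -- the block integrals
          intro j hj
          have hjn := Finset.mem_range.mp hj
          by_cases hj1 : j = n - 1
          · have hm : (j:ℤ) - n = (-1 : ℤ) := by omega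
            simp only [hm, if_pos hj1]
            exact B1_ev_inv hεpos hε2
          · have hm : (j:ℤ) - n ≠ (-1 : ℤ) := by omega
            simp only [if_neg hj1]
            exact B1_ev_ne hεpos hε2 hm
        · -- integrability of the blocks
          intro j _ r hr
          exact ContinuousOn.circleIntegrable hr.1.le (B1_cont hε2 hr _)
      -- assemble
      refine ⟨ρ, ?_, ev1, ev0⟩
      rw [hρ_def]
      exact (laurent_coeff_eq hn ψ U
        (PowerSeries.rescale (-(t : ℂ)) (PowerSeries.exp ℂ)) _ hU0 hψU hXD).symm
  obtain ⟨ρ, hρ, hev1, hev0⟩ := main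
  have e1 : Res1 = ρ := by
    obtain ⟨r, h1, h2⟩ := (hRes1.and hev1).exists
    exact mul_left_cancel₀ two_pi_I_ne (h1.symm.trans h2)
  have e0 : Res0 = ρ := by
    obtain ⟨r, h1, h2⟩ := (hRes0.and hev0).exists
    exact mul_left_cancel₀ two_pi_I_ne (h1.symm.trans h2)
  refine ⟨e1.trans e0.symm, ?_⟩
  rw [e1, hρ]
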